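/- The classical value of the 3-fold parallel repetition of Feige's game equals 5/16: the maximum over all deterministic strategies (f,g) of the winning probability of (f,g) in G_F^{×3} is exactly 5/16. In particular, the deterministic strategy where on questions (x_1,x_2,x_3), (y_1,y_2,y_3) Alice answers a_1 = ⊥, a_2 = x_1 ∨ x_3, a_3 = ⊥ if x_1 = 0 and a_3 = 1 if x_1 = 1, and Bob answers b_1 = y_2 ∧ y_3, b_2 = ⊥, b_3 = y_2 if y_2 ∧ y_3 = 0 and b_3 = ⊥ if y_2 ∧ y_3 = 1, wins with probability exactly 5/16, and no deterministic strategy does better. -/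
import Mathlib


open BigOperators

/-- The winning predicate of the `n`-fold parallel repetition of Feige's game: on questions
`x, y : Fin n → Bool` and answers `a, b : Fin n → Option Bool` (`none` = `⊥`), the players
win iff in every coordinate `i`, `(a_i, b_i) = (⊥, x_i)` or `(a_i, b_i) = (y_i, ⊥)`. -/
def FeigeWinN {n : ℕ} (x y : Fin n → Bool) (a b : Fin n → Option Bool) : Prop :=
  ∀ i, (a i = none ∧ b i = some (x i)) ∨ (a i = some (y i) ∧ b i = none)

instance {n : ℕ} (x y : Fin n → Bool) (a b : Fin n → Option Bool) :
    Decidable (FeigeWinN x y a b) := by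
  unfold FeigeWinN; infer_instance

/-- Winning probability of a deterministic strategy `(f, g)` in the `3`-fold parallel
repetition of Feige's game. -/
noncomputable def winProb3 (f g : (Fin 3 → Bool) → (Fin 3 → Option Bool)) : ℝ :=
  (1 / 4 ^ 3 : ℝ) * ∑ x : Fin 3 → Bool, ∑ y : Fin 3 → Bool,
    (if FeigeWinN x y (f x) (g y) then (1 : ℝ) else 0)

/-- Alice's strategy: `a₁ = ⊥`, `a₂ = x₁ ∨ x₃`, `a₃ = ⊥` if `x₁ = 0` and `a₃ = 1` if `x₁ = 1`. -/
def aliceStrat3 (x : Fin 3 → Bool) : Fin 3 → Option Bool :=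
  ![none, some (x 0 || x 2), if x 0 then some true else none]

/-- Bob's strategy: `b₁ = y₂ ∧ y₃`, `b₂ = ⊥`, `b₃ = y₂` if `y₂ ∧ y₃ = 0` and `b₃ = ⊥` otherwise. -/
def bobStrat3 (y : Fin 3 → Bool) : Fin 3 → Option Bool :=
  ![some (y 1 && y 2), none, if y 1 && y 2 then none else some (y 1)]

/-- the ⊥-set of an answer -/
def nset (h : Fin 3 → Option Bool) : Finset (Fin 3) :=
  Finset.univ.filter (fun i => h i = none)

lemma feige_symm {x y : Fin 3 → Bool} {a b : Fin 3 → Option Bool}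
    (h : FeigeWinN x y a b) : FeigeWinN y x b a := by
  intro i; rcases h i with ⟨h1, h2⟩ | ⟨h1, h2⟩
  · exact Or.inr ⟨h2, h1⟩
  · exact Or.inl ⟨h2, h1⟩

lemma win_compl {x y : Fin 3 → Bool} {a b : Fin 3 → Option Bool}
    (h : FeigeWinN x y a b) : nset b = (nset a)ᶜ := by
  ext i
  simp only [nset, Finset.mem_filter, Finset.mem_univ, true_and, Finset.mem_compl]
  rcases h i with ⟨h1, h2⟩ | ⟨h1, h2⟩ <;> simp [h1, h2]

lemma nset_card_le (a : Fin 3 → Option Bool) : (nset a).card ≤ 3 := by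
  have := Finset.card_le_univ (nset a)
  simpa using this

lemma deg_le (x : Fin 3 → Bool) (a : Fin 3 → Option Bool)
    (g : (Fin 3 → Bool) → (Fin 3 → Option Bool)) :
    (Finset.univ.filter (fun y => FeigeWinN x y a (g y))).card ≤ 2 ^ (nset a).card := by
  classical
  have hcard := Finset.card_le_card_of_injOn
    (s := Finset.univ.filter (fun y => FeigeWinN x y a (g y)))
    (f := fun (y : Fin 3 → Bool) (i : {i // i ∈ nset a}) => y i.1)
    (t := (Finset.univ : Finset ({i // i ∈ nset a} → Bool)))
    (fun y _ => Finset.mem_univ _) ?_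
  · calc (Finset.univ.filter (fun y => FeigeWinN x y a (g y))).card
        ≤ (Finset.univ : Finset ({i // i ∈ nset a} → Bool)).card := hcard
      _ = 2 ^ (nset a).card := by
          rw [Finset.card_univ, Fintype.card_fun]
          simp [Fintype.card_coe]
  · intro y1 h1 y2 h2 he
    simp only [Finset.coe_filter, Set.mem_setOf_eq] at h1 h2
    funext i
    by_cases hi : a i = none
    · exact congrFun he ⟨i, by simp [nset, hi]⟩
    · rcases h1.2 i with ⟨ha, _⟩ | ⟨ha, _⟩
      · exact absurd ha hi
      · rcases h2.2 i with ⟨hb, _⟩ | ⟨hb, _⟩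
        · exact absurd hb hi
        · rw [ha] at hb; exact Option.some_inj.mp hb

lemma key (f g : (Fin 3 → Bool) → (Fin 3 → Option Bool)) :
    ∑ x : Fin 3 → Bool, ∑ y : Fin 3 → Bool,
      (if FeigeWinN x y (f x) (g y) then (1 : ℕ) else 0) ≤ 20 := by
  classical
  set c : (Fin 3 → Bool) → (Fin 3 → Bool) → ℕ :=
    fun x y => if FeigeWinN x y (f x) (g y) then 1 else 0 with hc
  set s : (Fin 3 → Bool) → ℕ := fun x => (nset (f x)).card with hs
  set t : (Fin 3 → Bool) → ℕ := fun y => (nset (g y)).card with ht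
  set n : ℕ → ℕ := fun k => (Finset.univ.filter (fun x => s x = k)).card with hn
  set m : ℕ → ℕ := fun k => (Finset.univ.filter (fun y => t y = k)).card with hm
  have hmaps : ∀ x : Fin 3 → Bool, x ∈ (Finset.univ : Finset (Fin 3 → Bool)) →
      s x ∈ Finset.range 4 := by
    intro x _; simp only [Finset.mem_range]
    exact Nat.lt_succ_of_le (nset_card_le _)
  have hmaps' : ∀ y : Fin 3 → Bool, y ∈ (Finset.univ : Finset (Fin 3 → Bool)) →
      t y ∈ Finset.range 4 := by
    intro y _; simp only [Finset.mem_range]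
    exact Nat.lt_succ_of_le (nset_card_le _)
  -- decompose W by level
  have hW : ∑ k ∈ Finset.range 4, ∑ x ∈ Finset.univ.filter (fun x => s x = k), ∑ y, c x y
      = ∑ x, ∑ y, c x y :=
    Finset.sum_fiberwise_of_maps_to hmaps _
  -- bound 1
  have hb1 : ∀ k, (∑ x ∈ Finset.univ.filter (fun x => s x = k), ∑ y, c x y) ≤ n k * 2 ^ k := by
    intro k
    calc (∑ x ∈ Finset.univ.filter (fun x => s x = k), ∑ y, c x y)
        ≤ ∑ x ∈ Finset.univ.filter (fun x => s x = k), 2 ^ k := by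
          apply Finset.sum_le_sum
          intro x hx
          have hxk : s x = k := (Finset.mem_filter.mp hx).2
          have : ∑ y, c x y
              = (Finset.univ.filter (fun y => FeigeWinN x y (f x) (g y))).card := by
            simp [hc, Finset.sum_boole]
          rw [this, ← hxk]
          exact deg_le x (f x) g
      _ = n k * 2 ^ k := by rw [Finset.sum_const, smul_eq_mul]
  -- bound 2
  have hb2 : ∀ k, (∑ x ∈ Finset.univ.filter (fun x => s x = k), ∑ y, c x y)
      ≤ m (3 - k) * 2 ^ (3 - k) := by
    intro k
    rw [Finset.sum_comm]
    have hz : ∀ y ∈ Finset.univ.filter (fun y => ¬ t y = 3 - k),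
        (∑ x ∈ Finset.univ.filter (fun x => s x = k), c x y) = 0 := by
      intro y hy
      have hyt : ¬ t y = 3 - k := (Finset.mem_filter.mp hy).2
      apply Finset.sum_eq_zero
      intro x hx
      have hxk : s x = k := (Finset.mem_filter.mp hx).2
      simp only [hc, ite_eq_right_iff]
      intro hwin
      exfalso
      apply hyt
      have hco := win_compl hwin
      have : t y = 3 - s x := by
        simp only [ht, hs, hco, Finset.card_compl, Fintype.card_fin]
      omega
    calc (∑ y, ∑ x ∈ Finset.univ.filter (fun x => s x = k), c x y)
        = (∑ y ∈ Finset.univ.filter (fun y => t y = 3 - k),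
            ∑ x ∈ Finset.univ.filter (fun x => s x = k), c x y)
          + (∑ y ∈ Finset.univ.filter (fun y => ¬ t y = 3 - k),
            ∑ x ∈ Finset.univ.filter (fun x => s x = k), c x y) :=
          (Finset.sum_filter_add_sum_filter_not _ _ _).symm
      _ = ∑ y ∈ Finset.univ.filter (fun y => t y = 3 - k),
            ∑ x ∈ Finset.univ.filter (fun x => s x = k), c x y := by
          rw [Finset.sum_eq_zero hz, add_zero]
      _ ≤ ∑ y ∈ Finset.univ.filter (fun y => t y = 3 - k), 2 ^ (3 - k) := by
          apply Finset.sum_le_sum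
          intro y hy
          have hyt : t y = 3 - k := (Finset.mem_filter.mp hy).2
          calc (∑ x ∈ Finset.univ.filter (fun x => s x = k), c x y)
              ≤ ∑ x, c x y := Finset.sum_le_sum_of_subset (Finset.filter_subset _ _)
            _ = (Finset.univ.filter (fun x => FeigeWinN y x (g y) (f x))).card := by
                have : ∀ x, c x y = if FeigeWinN y x (g y) (f x) then 1 else 0 := by
                  intro x
                  simp only [hc]
                  congr 1
                  · exact propext ⟨feige_symm, feige_symm⟩
                simp only [this]
                simp [Finset.sum_boole]
            _ ≤ 2 ^ (nset (g y)).card := deg_le y (g y) f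
            _ = 2 ^ (3 - k) := by rw [← hyt]
      _ = m (3 - k) * 2 ^ (3 - k) := by rw [Finset.sum_const, smul_eq_mul]
  -- cardinality budgets
  have hcardn : ∑ k ∈ Finset.range 4, n k = 8 := by
    have := Finset.card_eq_sum_card_fiberwise hmaps
    simp only [Finset.card_univ] at this
    rw [← this]
    simp
  have hcardm : ∑ k ∈ Finset.range 4, m k = 8 := by
    have := Finset.card_eq_sum_card_fiberwise hmaps'
    simp only [Finset.card_univ] at this
    rw [← this]
    simp
  rw [← hW]
  simp only [Finset.sum_range_succ, Finset.sum_range_zero, zero_add] at hcardn hcardm ⊢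
  have b10 := hb1 0; have b11 := hb1 1; have b12 := hb1 2; have b13 := hb1 3
  have b20 := hb2 0; have b21 := hb2 1; have b22 := hb2 2; have b23 := hb2 3
  norm_num at b10 b11 b12 b13 b20 b21 b22 b23 ⊢
  omega


/-- The classical value of the `3`-fold parallel repetition of Feige's game equals `5/16`:
no deterministic strategy wins with probability greater than `5/16`, and the concrete
strategy above achieves exactly `5/16`. -/
theorem feige_three_fold_classical_value :
    (∀ f g : (Fin 3 → Bool) → (Fin 3 → Option Bool), winProb3 f g ≤ 5 / 16)
    ∧ winProb3 aliceStrat3 bobStrat3 = 5 / 16 := by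
  have hcast : ∀ f g : (Fin 3 → Bool) → (Fin 3 → Option Bool),
      winProb3 f g = (1 / 64 : ℝ) * ((∑ x : Fin 3 → Bool, ∑ y : Fin 3 → Bool,
        (if FeigeWinN x y (f x) (g y) then (1 : ℕ) else 0) : ℕ) : ℝ) := by
    intro f g
    unfold winProb3
    push_cast
    norm_num
  constructor
  · intro f g
    rw [hcast]
    have h := key f g
    have h' : ((∑ x : Fin 3 → Bool, ∑ y : Fin 3 → Bool,
        (if FeigeWinN x y (f x) (g y) then (1 : ℕ) else 0) : ℕ) : ℝ) ≤ 20 := by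
      exact_mod_cast h
    linarith
  · rw [hcast]
    have h20 : (∑ x : Fin 3 → Bool, ∑ y : Fin 3 → Bool,
        (if FeigeWinN x y (aliceStrat3 x) (bobStrat3 y) then (1 : ℕ) else 0)) = 20 := by
      decide
    rw [h20]
    norm_num
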